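/- For every R > 0 and all z, z' ∈ ℂ with |z| ≥ R and |z'| ≥ R, there exists a continuous path α : [0,1] → ℂ with α(0) = z, α(1) = z', |α(t)| ≥ R for all t ∈ [0,1], and len(α) ≤ (2 + π/2)·|z − z'|. -/

import Mathlib

open MvPolynomial Set
open scoped ENNReal

noncomputable section

abbrev Plane : Type := EuclideanSpace ℂ (Fin 2)

abbrev ProjPlane : Type := Projectivization ℂ (Fin 3 → ℂ)

def curve (f : MvPolynomial (Fin 2) ℂ) : Set Plane :=
  {p | MvPolynomial.eval (fun i => p i) f = 0}

def leadingForm (f : MvPolynomial (Fin 2) ℂ) : MvPolynomial (Fin 2) ℂ :=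
  MvPolynomial.homogeneousComponent f.totalDegree f

def homogenize (f : MvPolynomial (Fin 2) ℂ) : MvPolynomial (Fin 3) ℂ :=
  f.support.sum fun m =>
    MvPolynomial.monomial
      (Finsupp.single 0 (m 0) + Finsupp.single 1 (m 1) +
        Finsupp.single 2 (f.totalDegree - (m 0 + m 1))) (f.coeff m)

instance : TopologicalSpace ProjPlane :=
  @instTopologicalSpaceQuotient { v : Fin 3 → ℂ // v ≠ 0 }
    (projectivizationSetoid ℂ (Fin 3 → ℂ)) inferInstance

def projZeros (F : MvPolynomial (Fin 3) ℂ) : Set ProjPlane :=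
  {q | MvPolynomial.eval q.rep F = 0}

def lineAtInfinity : Set ProjPlane :=
  {q | q.rep 2 = 0}

def projClosure (f : MvPolynomial (Fin 2) ℂ) : Set ProjPlane :=
  projZeros (homogenize f)

def pointsAtInfinity (f : MvPolynomial (Fin 2) ℂ) : Set ProjPlane :=
  projClosure f ∩ lineAtInfinity

def singularPoints (F : MvPolynomial (Fin 3) ℂ) : Set ProjPlane :=
  {q | MvPolynomial.eval q.rep F = 0 ∧
    ∀ i : Fin 3, MvPolynomial.eval q.rep (MvPolynomial.pderiv i F) = 0}

def SameTopType {X Y : Type*} [TopologicalSpace X] [TopologicalSpace Y]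
    (A : Set X) (p : X) (B : Set Y) (q : Y) : Prop :=
  ∃ (U : Set X) (V : Set Y), IsOpen U ∧ IsOpen V ∧
    ∃ (hp : p ∈ U) (_ : q ∈ V) (h : U ≃ₜ V),
      (h ⟨p, hp⟩ : Y) = q ∧ ∀ x : U, (x : X) ∈ A ↔ (h x : Y) ∈ B

def IsBilipschitz {X Y : Type*} [MetricSpace X] [MetricSpace Y] (h : X → Y) : Prop :=
  Function.Bijective h ∧ ∃ c : ℝ, 0 < c ∧ ∀ x y : X,
    (1 / c) * dist x y ≤ dist (h x) (h y) ∧ dist (h x) (h y) ≤ c * dist x y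

def BilipschitzEquivAtInfinity (X Y : Set Plane) : Prop :=
  ∃ (K K' : Set Plane), IsCompact K ∧ IsCompact K' ∧
    ∃ h : (X \ K : Set Plane) → (Y \ K' : Set Plane), IsBilipschitz h


lemma evar_lip {f : ℝ → ℂ} {C p q : ℝ} (hC : 0 ≤ C) (hpq : p ≤ q)
    (h : LipschitzOnWith (Real.toNNReal C) f (Set.Icc p q)) :
    eVariationOn f (Set.Icc p q) ≤ ENNReal.ofReal (C * (q - p)) := by
  have h1 := h.comp_eVariationOn_le (Set.mapsTo_id (Set.Icc p q))
  have h2 : eVariationOn (id : ℝ → ℝ) (Set.Icc p q) ≤ ENNReal.ofReal (q - p) := by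
    have h3 := MonotoneOn.eVariationOn_le (f := (id : ℝ → ℝ)) (s := Set.Icc p q)
      monotoneOn_id (left_mem_Icc.2 hpq) (right_mem_Icc.2 hpq)
    simpa using h3
  calc eVariationOn f (Set.Icc p q) = eVariationOn (f ∘ id) (Set.Icc p q) := by
        simp [Function.comp_def]
    _ ≤ (Real.toNNReal C : ℝ≥0∞) * eVariationOn (id : ℝ → ℝ) (Set.Icc p q) := h1
    _ ≤ ENNReal.ofReal C * ENNReal.ofReal (q - p) := by
        rw [ENNReal.ofReal]; gcongr
    _ = ENNReal.ofReal (C * (q - p)) := (ENNReal.ofReal_mul hC).symm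

lemma key_aux {a b d θ r : ℝ} (ha : 0 < a) (hb : 0 < b) (hr0 : 0 < r)
    (hra : r ≤ a) (hrb : r ≤ b) (hθπ : |θ| ≤ Real.pi)
    (hd2' : d ^ 2 = a ^ 2 + b ^ 2 - 2 * a * b * Real.cos θ) (hd0 : 0 ≤ d) :
    r * |θ| ≤ Real.pi / 2 * d := by
  have hπ : 0 < Real.pi := Real.pi_pos
  have hcb : Real.cos θ ≤ 1 - 2 / Real.pi ^ 2 * θ ^ 2 :=
    Real.cos_le_one_sub_mul_cos_sq hθπ
  have hrr : r * r ≤ a * b := mul_le_mul hra hrb hr0.le ha.le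
  have hcb' : Real.pi ^ 2 * Real.cos θ ≤ Real.pi ^ 2 - 2 * θ ^ 2 := by
    have h2 := mul_le_mul_of_nonneg_left hcb (le_of_lt (by positivity : (0:ℝ) < Real.pi ^ 2))
    have h3 : Real.pi ^ 2 * (1 - 2 / Real.pi ^ 2 * θ ^ 2) = Real.pi ^ 2 - 2 * θ ^ 2 := by
      field_simp
    linarith
  have h1 : (2 * (r * |θ|)) ^ 2 ≤ (Real.pi * d) ^ 2 := by
    have hsq : |θ| ^ 2 = θ ^ 2 := sq_abs θ
    have e0 : Real.pi ^ 2 * d ^ 2 =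
        Real.pi ^ 2 * (a ^ 2 + b ^ 2) - 2 * (a * b) * (Real.pi ^ 2 * Real.cos θ) := by
      rw [hd2']; ring
    have e2 : 2 * (a * b) * (Real.pi ^ 2 * Real.cos θ) ≤
        2 * (a * b) * (Real.pi ^ 2 - 2 * θ ^ 2) :=
      mul_le_mul_of_nonneg_left hcb' (by positivity)
    have e3 : 4 * (r * r) * θ ^ 2 ≤ 4 * (a * b) * θ ^ 2 := by
      have := mul_le_mul_of_nonneg_right hrr (sq_nonneg θ)
      linarith
    nlinarith [e0, e2, e3, sq_nonneg (Real.pi * (a - b)), hsq]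
  have h2 : 2 * (r * |θ|) ≤ Real.pi * d := by
    have h3 := Real.sqrt_le_sqrt h1
    rwa [Real.sqrt_sq (by positivity), Real.sqrt_sq (by positivity)] at h3
  linarith

lemma key_ineq {z z' : ℂ} (hz : z ≠ 0) (hz' : z' ≠ 0) :
    min ‖z‖ ‖z'‖ * |Complex.arg (z' / z)| ≤ Real.pi / 2 * ‖z - z'‖ := by
  have ha : 0 < ‖z‖ := norm_pos_iff.2 hz
  have hb : 0 < ‖z'‖ := norm_pos_iff.2 hz'
  have hu : z' / z ≠ 0 := div_ne_zero hz' hz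
  have hm : ‖z' / z‖ = ‖z'‖ / ‖z‖ := by rw [norm_div]
  have hcos : Real.cos (Complex.arg (z' / z)) = (z' / z).re / (‖z'‖ / ‖z‖) := by
    rw [Complex.cos_arg hu, hm]
  have haz : ‖z‖ ≠ 0 := by simpa using hz
  have haz' : ‖z'‖ ≠ 0 := by simpa using hz'
  have hx : ‖z‖ * (z' / z).re = ‖z'‖ * Real.cos (Complex.arg (z' / z)) := by
    rw [hcos]; field_simp [haz, haz']
  have hm2 : (z' / z).re ^ 2 + (z' / z).im ^ 2 = (‖z'‖ / ‖z‖) ^ 2 := by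
    have h := Complex.sq_norm (z' / z)
    rw [Complex.normSq_apply, hm] at h
    linear_combination -h
  have hy : (‖z‖ * (z' / z).re) ^ 2 + (‖z‖ * (z' / z).im) ^ 2 = ‖z'‖ ^ 2 := by
    have h := hm2
    field_simp [haz] at h
    linear_combination h
  have hzz : z - z' = z * (1 - z' / z) := by field_simp
  have hd2 : ‖z - z'‖ ^ 2 = ‖z‖ ^ 2 * ((1 - (z' / z).re) ^ 2 + (z' / z).im ^ 2) := by
    rw [hzz, norm_mul, mul_pow]
    congr 1
    rw [Complex.sq_norm,
      Complex.normSq_apply]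
    simp [Complex.sub_re, Complex.sub_im, sq]
  have hd2' : ‖z - z'‖ ^ 2 = ‖z‖ ^ 2 + ‖z'‖ ^ 2 -
      2 * ‖z‖ * ‖z'‖ * Real.cos (Complex.arg (z' / z)) := by
    rw [hd2]; linear_combination (-(2 * ‖z‖)) * hx + hy
  exact key_aux ha hb (lt_min ha hb) (min_le_left _ _) (min_le_right _ _)
    (Complex.abs_arg_le_pi _) hd2' (norm_nonneg _)

theorem stmt11 (R : ℝ) (hR : 0 < R) (z z' : ℂ) (hz : R ≤ ‖z‖) (hz' : R ≤ ‖z'‖) :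
    ∃ α : ℝ → ℂ, ContinuousOn α (Set.Icc 0 1) ∧ α 0 = z ∧ α 1 = z' ∧
      (∀ t ∈ Set.Icc (0:ℝ) 1, R ≤ ‖α t‖) ∧
      eVariationOn α (Set.Icc 0 1) ≤
        ENNReal.ofReal ((2 + Real.pi / 2) * ‖z - z'‖) := by
  classical
  have ha0 : 0 < ‖z‖ := lt_of_lt_of_le hR hz
  have hb0 : 0 < ‖z'‖ := lt_of_lt_of_le hR hz'
  have hz0 : z ≠ 0 := norm_pos_iff.1 ha0
  have hz'0 : z' ≠ 0 := norm_pos_iff.1 hb0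
  obtain ⟨a, ha_def⟩ : ∃ x : ℝ, x = ‖z‖ := ⟨_, rfl⟩
  obtain ⟨b, hb_def⟩ : ∃ x : ℝ, x = ‖z'‖ := ⟨_, rfl⟩
  obtain ⟨r, hr_def⟩ : ∃ x : ℝ, x = min a b := ⟨_, rfl⟩
  obtain ⟨θ, hθ_def⟩ : ∃ x : ℝ, x = Complex.arg (z' / z) := ⟨_, rfl⟩
  have ha : 0 < a := ha_def ▸ ha0
  have hb : 0 < b := hb_def ▸ hb0
  have hra : r ≤ a := by rw [hr_def]; exact min_le_left _ _
  have hrb : r ≤ b := by rw [hr_def]; exact min_le_right _ _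
  have hRr : R ≤ r := by rw [hr_def]; exact le_min (ha_def ▸ hz) (hb_def ▸ hz')
  have hr0 : 0 < r := lt_of_lt_of_le hR hRr
  obtain ⟨w, hw_def⟩ : ∃ x : ℂ, x = ((r / a : ℝ) : ℂ) * z := ⟨_, rfl⟩
  obtain ⟨w', hw'_def⟩ : ∃ x : ℂ, x = ((r / b : ℝ) : ℂ) * z' := ⟨_, rfl⟩
  obtain ⟨g₁, hg₁⟩ : ∃ g : ℝ → ℂ, g = fun t : ℝ => z + ((3 * t : ℝ) : ℂ) * (w - z) := ⟨_, rfl⟩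
  obtain ⟨g₂, hg₂⟩ : ∃ g : ℝ → ℂ,
      g = fun t : ℝ => w * Complex.exp (((3 * θ * t - θ : ℝ) : ℂ) * Complex.I) := ⟨_, rfl⟩
  obtain ⟨g₃, hg₃⟩ : ∃ g : ℝ → ℂ, g = fun t : ℝ => w' + ((3 * t - 2 : ℝ) : ℂ) * (z' - w') :=
    ⟨_, rfl⟩
  obtain ⟨α, hα⟩ : ∃ α : ℝ → ℂ,
      α = fun t : ℝ => if t ≤ 1/3 then g₁ t else if t ≤ 2/3 then g₂ t else g₃ t := ⟨_, rfl⟩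
  -- basic norms
  have hwnorm : ‖w‖ = r := by
    rw [hw_def, norm_mul, Complex.norm_real, Real.norm_eq_abs, ← ha_def,
      abs_of_nonneg (by positivity), div_mul_cancel₀ _ ha.ne']
  have hwz : ‖w - z‖ = a - r := by
    have h1 : w - z = ((r / a - 1 : ℝ) : ℂ) * z := by rw [hw_def]; push_cast; ring
    rw [h1, norm_mul, Complex.norm_real, Real.norm_eq_abs, ← ha_def,
      abs_of_nonpos (by rw [sub_nonpos, div_le_one ha]; exact hra)]
    field_simp
    ring
  have hw'z : ‖z' - w'‖ = b - r := by
    have h1 : z' - w' = ((1 - r / b : ℝ) : ℂ) * z' := by rw [hw'_def]; push_cast; ring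
    rw [h1, norm_mul, Complex.norm_real, Real.norm_eq_abs, ← hb_def,
      abs_of_nonneg (by rw [sub_nonneg, div_le_one hb]; exact hrb)]
    field_simp
  -- junctions
  have J1 : g₁ (1/3) = g₂ (1/3) := by
    simp only [hg₁, hg₂]
    rw [show ((3 * θ * (1/3) - θ : ℝ) : ℂ) = 0 by push_cast; ring]
    rw [show ((3 * (1/3) : ℝ) : ℂ) = 1 by norm_num]
    simp [Complex.exp_zero]
  have J2 : g₂ (2/3) = g₃ (2/3) := by
    have habs := Complex.norm_mul_exp_arg_mul_I (z' / z)
    have hm : ‖z' / z‖ = b / a := by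
      rw [norm_div, ha_def, hb_def]
    rw [hm, ← hθ_def] at habs
    simp only [hg₂, hg₃, hw_def, hw'_def]
    rw [show ((3 * θ * (2/3) - θ : ℝ) : ℂ) = (θ : ℂ) by push_cast; ring]
    have hba : ((b / a : ℝ) : ℂ) ≠ 0 := by
      simp only [ne_eq, Complex.ofReal_eq_zero]
      positivity
    have hexp : Complex.exp ((θ : ℂ) * Complex.I) = (z' / z) * ((b / a : ℝ) : ℂ)⁻¹ :=
      (eq_mul_inv_iff_mul_eq₀ hba).mpr ((mul_comm _ _).trans habs)
    rw [hexp]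
    have hac : (a : ℂ) ≠ 0 := by simp [ha.ne']
    have hbc : (b : ℂ) ≠ 0 := by simp [hb.ne']
    push_cast
    field_simp
    ring
  -- continuity
  have cg₁ : Continuous g₁ := by rw [hg₁]; fun_prop
  have cg₂ : Continuous g₂ := by rw [hg₂]; fun_prop
  have cg₃ : Continuous g₃ := by rw [hg₃]; fun_prop
  have cα : Continuous α := by
    rw [hα]
    refine Continuous.if_le cg₁ ?_ continuous_id continuous_const ?_
    · exact Continuous.if_le cg₂ cg₃ continuous_id continuous_const
        (fun x hx => by rw [hx]; exact J2)
    · intro x hx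
      rw [hx, if_pos (by norm_num : (1:ℝ)/3 ≤ 2/3)]
      exact J1
  have hα0 : α 0 = z := by
    rw [hα]; simp only
    rw [if_pos (by norm_num : (0:ℝ) ≤ 1/3), hg₁]
    norm_num
  have hα1 : α 1 = z' := by
    rw [hα]; simp only
    rw [if_neg (by norm_num : ¬ (1:ℝ) ≤ 1/3), if_neg (by norm_num : ¬ (1:ℝ) ≤ 2/3), hg₃]
    simp only
    rw [show ((3 * (1:ℝ) - 2 : ℝ) : ℂ) = 1 by norm_num]
    ring
  -- norm lower bound
  have hnorm : ∀ t ∈ Set.Icc (0:ℝ) 1, R ≤ ‖α t‖ := by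
    intro t ht
    rw [hα]; simp only
    split_ifs with h1 h2
    · rw [hg₁]; simp only
      have key : z + ((3 * t : ℝ) : ℂ) * (w - z) = ((1 - 3 * t * (1 - r / a) : ℝ) : ℂ) * z := by
        rw [hw_def]; push_cast; ring
      rw [key, norm_mul, Complex.norm_real, Real.norm_eq_abs, ← ha_def]
      have h6 : r / a ≤ 1 := (div_le_one ha).2 hra
      have h5 : r / a ≤ 1 - 3 * t * (1 - r / a) := by nlinarith [ht.1]
      have h7 : r / a * a = r := div_mul_cancel₀ _ ha.ne'
      have h8 : r / a * a ≤ |1 - 3 * t * (1 - r / a)| * a :=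
        mul_le_mul_of_nonneg_right (h5.trans (le_abs_self _)) ha.le
      rw [h7] at h8
      linarith
    · rw [hg₂]; simp only
      have hE : ‖Complex.exp (((3 * θ * t - θ : ℝ) : ℂ) * Complex.I)‖ = 1 :=
        Complex.norm_exp_ofReal_mul_I _
      rw [norm_mul, hwnorm, hE, mul_one]
      exact hRr
    · rw [hg₃]; simp only
      have key : w' + ((3 * t - 2 : ℝ) : ℂ) * (z' - w') =
          ((r / b + (3 * t - 2) * (1 - r / b) : ℝ) : ℂ) * z' := by
        rw [hw'_def]; push_cast; ring
      rw [key, norm_mul, Complex.norm_real, Real.norm_eq_abs, ← hb_def]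
      have h6 : r / b ≤ 1 := (div_le_one hb).2 hrb
      have h5 : r / b ≤ r / b + (3 * t - 2) * (1 - r / b) := by nlinarith [ht.2]
      have h7 : r / b * b = r := div_mul_cancel₀ _ hb.ne'
      have h8 : r / b * b ≤ |r / b + (3 * t - 2) * (1 - r / b)| * b :=
        mul_le_mul_of_nonneg_right (h5.trans (le_abs_self _)) hb.le
      rw [h7] at h8
      linarith
  -- Lipschitz estimates
  have har : (0:ℝ) ≤ 3 * (a - r) := by linarith
  have hbr : (0:ℝ) ≤ 3 * (b - r) := by linarith
  have hrθ : (0:ℝ) ≤ 3 * (r * |θ|) := by positivity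
  have L₁ : LipschitzWith (Real.toNNReal (3 * (a - r))) g₁ := by
    apply LipschitzWith.of_dist_le_mul
    intro s t
    have e : g₁ s - g₁ t = ((3 * s - 3 * t : ℝ) : ℂ) * (w - z) := by rw [hg₁]; push_cast; ring
    rw [dist_eq_norm, e, norm_mul, Complex.norm_real, Real.norm_eq_abs, hwz,
      Real.coe_toNNReal _ har, Real.dist_eq]
    have e2 : |3 * s - 3 * t| = 3 * |s - t| := by
      rw [show 3 * s - 3 * t = 3 * (s - t) by ring, abs_mul]; norm_num
    rw [e2]; exact le_of_eq (by ring)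
  have L₃ : LipschitzWith (Real.toNNReal (3 * (b - r))) g₃ := by
    apply LipschitzWith.of_dist_le_mul
    intro s t
    have e : g₃ s - g₃ t = ((3 * s - 3 * t : ℝ) : ℂ) * (z' - w') := by rw [hg₃]; push_cast; ring
    rw [dist_eq_norm, e, norm_mul, Complex.norm_real, Real.norm_eq_abs, hw'z,
      Real.coe_toNNReal _ hbr, Real.dist_eq]
    have e2 : |3 * s - 3 * t| = 3 * |s - t| := by
      rw [show 3 * s - 3 * t = 3 * (s - t) by ring, abs_mul]; norm_num
    rw [e2]; exact le_of_eq (by ring)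
  have L₂ : LipschitzWith (Real.toNNReal (3 * (r * |θ|))) g₂ := by
    have hd : ∀ t : ℝ, HasDerivAt g₂
        (w * (Complex.exp (((3 * θ * t - θ : ℝ) : ℂ) * Complex.I) *
          (((3 * θ : ℝ) : ℂ) * Complex.I))) t := by
      intro t
      have h1 : HasDerivAt (fun t : ℝ => 3 * θ * t - θ) (3 * θ) t := by
        simpa using ((hasDerivAt_id t).const_mul (3 * θ)).sub_const θ
      have h5 := (((h1.ofReal_comp.mul_const Complex.I).cexp).const_mul w)
      rw [hg₂]
      exact h5
    have hbound : ∀ x ∈ (Set.univ : Set ℝ),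
        ‖w * (Complex.exp (((3 * θ * x - θ : ℝ) : ℂ) * Complex.I) *
          (((3 * θ : ℝ) : ℂ) * Complex.I))‖₊ ≤ Real.toNNReal (3 * (r * |θ|)) := by
      intro x _
      apply NNReal.coe_le_coe.1
      rw [coe_nnnorm, Real.coe_toNNReal _ hrθ]
      have hE : ‖Complex.exp (((3 * θ * x - θ : ℝ) : ℂ) * Complex.I)‖ = 1 :=
        Complex.norm_exp_ofReal_mul_I _
      rw [norm_mul, hwnorm, norm_mul, hE, one_mul, norm_mul, Complex.norm_real,
        Real.norm_eq_abs, Complex.norm_I, mul_one, abs_mul]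
      rw [show |(3:ℝ)| = 3 by norm_num]
      exact le_of_eq (by ring)
    have := Convex.lipschitzOnWith_of_nnnorm_hasDerivWithin_le (convex_univ)
      (fun x _ => (hd x).hasDerivWithinAt) hbound
    rwa [lipschitzOnWith_univ] at this
  -- piecewise equality
  have E₁ : Set.EqOn α g₁ (Set.Icc 0 (1/3)) := by
    intro t ht; rw [hα]; simp only; rw [if_pos ht.2]
  have E₂ : Set.EqOn α g₂ (Set.Icc (1/3) (2/3)) := by
    intro t ht; rw [hα]; simp only
    by_cases h : t ≤ 1/3
    · have ht13 : t = 1/3 := le_antisymm h ht.1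
      rw [if_pos h, ht13]; exact J1
    · rw [if_neg h, if_pos ht.2]
  have E₃ : Set.EqOn α g₃ (Set.Icc (2/3) 1) := by
    intro t ht; rw [hα]; simp only
    rw [if_neg (by linarith [ht.1] : ¬ t ≤ 1/3)]
    by_cases h : t ≤ 2/3
    · have ht23 : t = 2/3 := le_antisymm h ht.1
      rw [if_pos h, ht23]; exact J2
    · rw [if_neg h]
  -- variation of pieces
  have V₁ : eVariationOn α (Set.Icc 0 (1/3)) ≤ ENNReal.ofReal (3 * (a - r) * (1/3 - 0)) := by
    rw [eVariationOn.eq_of_eqOn E₁]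
    exact evar_lip har (by norm_num) (L₁.lipschitzOnWith (s := Set.Icc (0:ℝ) (1/3)))
  have V₂ : eVariationOn α (Set.Icc (1/3) (2/3)) ≤
      ENNReal.ofReal (3 * (r * |θ|) * (2/3 - 1/3)) := by
    rw [eVariationOn.eq_of_eqOn E₂]
    exact evar_lip hrθ (by norm_num) (L₂.lipschitzOnWith (s := Set.Icc (1/3:ℝ) (2/3)))
  have V₃ : eVariationOn α (Set.Icc (2/3) 1) ≤ ENNReal.ofReal (3 * (b - r) * (1 - 2/3)) := by
    rw [eVariationOn.eq_of_eqOn E₃]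
    exact evar_lip hbr (by norm_num) (L₃.lipschitzOnWith (s := Set.Icc (2/3:ℝ) 1))
  -- splitting
  have split1 : eVariationOn α (Set.Icc 0 1) =
      eVariationOn α (Set.Icc 0 (1/3)) + eVariationOn α (Set.Icc (1/3) 1) := by
    have h := eVariationOn.Icc_add_Icc α (s := Set.Icc (0:ℝ) 1)
      (by norm_num : (0:ℝ) ≤ 1/3) (by norm_num : (1/3:ℝ) ≤ 1) (by norm_num)
    rw [Set.inter_eq_right.2 (Set.Icc_subset_Icc le_rfl (by norm_num)),
      Set.inter_eq_right.2 (Set.Icc_subset_Icc (by norm_num) le_rfl),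
      Set.inter_self] at h
    exact h.symm
  have split2 : eVariationOn α (Set.Icc (1/3) 1) =
      eVariationOn α (Set.Icc (1/3) (2/3)) + eVariationOn α (Set.Icc (2/3) 1) := by
    have h := eVariationOn.Icc_add_Icc α (s := Set.Icc (1/3:ℝ) 1)
      (by norm_num : (1/3:ℝ) ≤ 2/3) (by norm_num : (2/3:ℝ) ≤ 1) (by norm_num)
    rw [Set.inter_eq_right.2 (Set.Icc_subset_Icc le_rfl (by norm_num)),
      Set.inter_eq_right.2 (Set.Icc_subset_Icc (by norm_num) le_rfl),
      Set.inter_self] at h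
    exact h.symm
  -- key inequality
  have hkey : r * |θ| ≤ Real.pi / 2 * ‖z - z'‖ := by
    have h := key_ineq hz0 hz'0
    rw [← ha_def, ← hb_def, ← hr_def, ← hθ_def] at h
    exact h
  have hsum : (a - r) + (b - r) ≤ ‖z - z'‖ := by
    have habs := abs_norm_sub_norm_le z z'
    rw [← ha_def, ← hb_def] at habs
    have h2 := abs_le.1 habs
    rcases le_total a b with h | h
    · have : r = a := by rw [hr_def, min_eq_left h]
      rw [this]; linarith [h2.2]
    · have : r = b := by rw [hr_def, min_eq_right h]
      rw [this]; linarith [h2.1]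
  refine ⟨α, cα.continuousOn, hα0, hα1, hnorm, ?_⟩
  rw [split1, split2]
  calc eVariationOn α (Set.Icc 0 (1/3)) +
      (eVariationOn α (Set.Icc (1/3) (2/3)) + eVariationOn α (Set.Icc (2/3) 1)) ≤
      ENNReal.ofReal (3 * (a - r) * (1/3 - 0)) +
      (ENNReal.ofReal (3 * (r * |θ|) * (2/3 - 1/3)) +
        ENNReal.ofReal (3 * (b - r) * (1 - 2/3))) :=
        add_le_add V₁ (add_le_add V₂ V₃)
    _ = ENNReal.ofReal (3 * (a - r) * (1/3 - 0) + (3 * (r * |θ|) * (2/3 - 1/3) +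
        3 * (b - r) * (1 - 2/3))) := by
        rw [← ENNReal.ofReal_add (by positivity) (by positivity),
          ← ENNReal.ofReal_add (by positivity) (by positivity)]
    _ ≤ ENNReal.ofReal ((2 + Real.pi / 2) * ‖z - z'‖) := by
        apply ENNReal.ofReal_le_ofReal
        have hd0 : (0:ℝ) ≤ ‖z - z'‖ := norm_nonneg _
        nlinarith [hkey, hsum]
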